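/- For every nonempty finite multiset S of positive integers with maximum element m and cardinality n (counting multiplicities), there exists a finite poset P of cardinality m + n − 1 whose multiset of maximal chain cardinalities equals S. -/

import Mathlib

open scoped Classical in
/-- The finite set of maximal chains of a finite poset, as finsets. -/
noncomputable def maxChains (α : Type*) [Fintype α] [PartialOrder α] : Finset (Finset α) :=
  Finset.univ.filter (fun s : Finset α => IsMaxChain (· ≤ ·) (s : Set α))

/-- The multiset of cardinalities of the maximal chains of a finite poset. -/
noncomputable def mcMultiset (α : Type*) [Fintype α] [PartialOrder α] : Multiset ℕ :=
  (maxChains α).val.map Finset.card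

/-- Auxiliary order relation. -/
def auxLE {m n : ℕ} (f : Fin n → ℕ) : Fin m ⊕ Fin n → Fin m ⊕ Fin n → Prop
  | .inl i, .inl j => i ≤ j
  | .inl i, .inr k => i.val + 2 ≤ f k
  | .inr _, .inl _ => False
  | .inr k, .inr k' => k = k'

/-- The auxiliary partial order. -/
def auxOrd {m n : ℕ} (f : Fin n → ℕ) : PartialOrder (Fin m ⊕ Fin n) where
  le := auxLE f
  lt a b := auxLE f a b ∧ ¬ auxLE f b a
  lt_iff_le_not_ge _ _ := Iff.rfl
  le_refl x := by cases x with
    | inl i => exact le_refl i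
    | inr k => exact rfl
  le_trans x y z hxy hyz := by
    rcases x with i | k <;> rcases y with j | k' <;> rcases z with j' | k''
    · have h1 : i.val ≤ j.val := hxy
      have h2 : j.val ≤ j'.val := hyz
      exact Nat.le_trans h1 h2
    · have h1 : i.val ≤ j.val := hxy
      have h2 : j.val + 2 ≤ f k'' := hyz
      show i.val + 2 ≤ f k''
      omega
    · exact hyz.elim
    · have h : k' = k'' := hyz
      subst h
      exact hxy
    · exact hxy.elim
    · exact hxy.elim
    · exact hyz.elim
    · have ha : k = k' := hxy
      have hb : k' = k'' := hyz
      exact ha.trans hb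
  le_antisymm x y h1 h2 := by
    rcases x with i | k <;> rcases y with j | k'
    · have ha : i.val ≤ j.val := h1
      have hb : j.val ≤ i.val := h2
      exact congrArg Sum.inl (Fin.ext (Nat.le_antisymm ha hb))
    · exact h2.elim
    · exact h1.elim
    · exact congrArg Sum.inr h1

/-- The chain associated to index `k`. -/
noncomputable def auxChain {m n : ℕ} (f : Fin n → ℕ) (k : Fin n) :
    Finset (Fin m ⊕ Fin n) :=
  (Finset.univ.filter (fun j : Fin m => j.val + 2 ≤ f k)).image Sum.inl ∪ {Sum.inr k}

lemma mem_auxChain {m n : ℕ} (f : Fin n → ℕ) (k : Fin n) (x : Fin m ⊕ Fin n) :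
    x ∈ auxChain f k ↔
      (∃ j : Fin m, j.val + 2 ≤ f k ∧ x = Sum.inl j) ∨ x = Sum.inr k := by
  simp [auxChain, eq_comm]
  exact or_comm

lemma card_filter_val_lt (m t : ℕ) (h : t ≤ m) :
    (Finset.univ.filter (fun j : Fin m => j.val < t)).card = t := by
  have heq : (Finset.univ.filter (fun j : Fin m => j.val < t)) =
      (Finset.univ : Finset (Fin t)).map ⟨Fin.castLE h, Fin.castLE_injective h⟩ := by
    ext j
    simp only [Finset.mem_filter, Finset.mem_univ, true_and, Finset.mem_map,
      Function.Embedding.coeFn_mk]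
    constructor
    · intro hj; exact ⟨⟨j.val, hj⟩, Fin.ext rfl⟩
    · rintro ⟨i, rfl⟩; exact i.isLt
  rw [heq, Finset.card_map, Finset.card_univ, Fintype.card_fin]

theorem exists_poset_of_multiset (S : Multiset ℕ) (hpos : ∀ x ∈ S, 0 < x)
    (m : ℕ) (hm : m ∈ S) (hmax : ∀ x ∈ S, x ≤ m) :
    ∃ (α : Type) (i1 : Fintype α) (i2 : PartialOrder α),
      @Fintype.card α i1 = m + Multiset.card S - 1 ∧ @mcMultiset α i1 i2 = S := by
  classical
  set l : List ℕ := S.toList with hl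
  have hlS : (l : Multiset ℕ) = S := S.coe_toList
  set n : ℕ := l.length with hn
  have hnS : n = Multiset.card S := by rw [hn, ← hlS]; simp
  set f : Fin n → ℕ := l.get with hf
  have hm1 : 1 ≤ m := hpos m hm
  have hfpos : ∀ k, 1 ≤ f k := fun k => hpos _ (by rw [← hlS]; exact List.get_mem l k)
  have hfle : ∀ k, f k ≤ m := fun k => hmax _ (by rw [← hlS]; exact List.get_mem l k)
  obtain ⟨k0, hk0⟩ : ∃ k : Fin n, f k = m := by
    rw [← hlS] at hm
    obtain ⟨k, hk⟩ := List.mem_iff_get.mp hm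
    exact ⟨k, hk⟩
  refine ⟨Fin (m - 1) ⊕ Fin n, inferInstance, auxOrd f, ?_, ?_⟩
  · simp [hnS]; omega
  set r : (Fin (m - 1) ⊕ Fin n) → (Fin (m - 1) ⊕ Fin n) → Prop := (auxOrd f).le with hr
  -- a chain containing `inr k` is contained in `auxChain f k`
  have hsub : ∀ (s : Set (Fin (m - 1) ⊕ Fin n)) (k : Fin n), IsChain r s →
      Sum.inr k ∈ s → s ⊆ (auxChain (m := m - 1) f k : Set _) := by
    intro s k hc hk x hx
    rcases eq_or_ne x (Sum.inr k) with rfl | hne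
    · simp [mem_auxChain]
    · have hcomp := hc hx hk hne
      rcases x with i | k'
      · rcases hcomp with h | h
        · have h' : i.val + 2 ≤ f k := h
          exact (mem_auxChain f k _).mpr (Or.inl ⟨i, h', rfl⟩)
        · exact (h : False).elim
      · exfalso
        rcases hcomp with h | h
        · exact hne (congrArg Sum.inr (h : k' = k))
        · exact hne (congrArg Sum.inr (h : k = k')).symm
  -- auxChain is a chain
  have hchain : ∀ k : Fin n, IsChain r (auxChain (m := m - 1) f k : Set (Fin (m - 1) ⊕ Fin n)) := by
    intro k x hx y hy hne
    rw [Finset.mem_coe, mem_auxChain] at hx hy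
    rcases hx with ⟨i, hi, rfl⟩ | rfl <;> rcases hy with ⟨j, hj, rfl⟩ | rfl
    · rcases le_total i j with h | h
      · exact Or.inl (h : i ≤ j)
      · exact Or.inr (h : j ≤ i)
    · exact Or.inl (hi : _ + 2 ≤ f k)
    · exact Or.inr (hj : _ + 2 ≤ f k)
    · exact absurd rfl hne
  -- auxChain is a maximal chain
  have hmaxchain : ∀ k : Fin n,
      IsMaxChain r (auxChain (m := m - 1) f k : Set (Fin (m - 1) ⊕ Fin n)) := by
    intro k
    refine ⟨hchain k, fun t ht hsub' => ?_⟩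
    have hkt : Sum.inr k ∈ t := hsub' (by simp [mem_auxChain])
    exact le_antisymm hsub' (hsub t k ht hkt)
  -- every maximal chain is an auxChain
  have hclass : ∀ s : Finset (Fin (m - 1) ⊕ Fin n),
      IsMaxChain r (s : Set _) → ∃ k, s = auxChain (m := m - 1) f k := by
    intro s hs
    obtain ⟨k, hk⟩ : ∃ k : Fin n, Sum.inr k ∈ s := by
      by_contra h
      push_neg at h
      have hc : IsChain r (insert (Sum.inr k0) (s : Set (Fin (m - 1) ⊕ Fin n))) := by
        apply hs.1.insert
        intro y hy hne
        rcases y with i | k'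
        · refine Or.inr ?_
          show i.val + 2 ≤ f k0
          have := i.isLt
          omega
        · exact absurd hy (by exact_mod_cast h k')
      have heq := hs.2 hc (Set.subset_insert _ _)
      have hmem : Sum.inr k0 ∈ (s : Set (Fin (m - 1) ⊕ Fin n)) := by
        rw [heq]; exact Set.mem_insert _ _
      exact (by exact_mod_cast h k0 : Sum.inr k0 ∉ (s : Set (Fin (m - 1) ⊕ Fin n))) hmem
    refine ⟨k, ?_⟩
    have h1 : (s : Set (Fin (m - 1) ⊕ Fin n)) ⊆ ((auxChain (m := m - 1) f k : Finset _) : Set (Fin (m - 1) ⊕ Fin n)) := hsub _ k hs.1 hk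
    have h2 := hs.2 (hchain k) h1
    exact_mod_cast Finset.coe_injective h2
  -- cardinality of auxChain
  have hcard : ∀ k : Fin n, (auxChain (m := m - 1) f k).card = f k := by
    intro k
    rw [auxChain, Finset.card_union_of_disjoint (by simp), Finset.card_image_of_injective _
      Sum.inl_injective, Finset.card_singleton]
    have h1 := hfpos k
    have h2 := hfle k
    have heq : (Finset.univ.filter (fun j : Fin (m - 1) => j.val + 2 ≤ f k)) =
        (Finset.univ.filter (fun j : Fin (m - 1) => j.val < f k - 1)) := by
      apply Finset.filter_congr; intro j _
      constructor <;> intro h <;> omega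
    rw [heq, card_filter_val_lt (m - 1) (f k - 1) (by omega)]
    omega
  -- injectivity
  have hinj : Function.Injective (auxChain (m := m - 1) f) := by
    intro k k' h
    have hmem : Sum.inr k ∈ auxChain (m := m - 1) f k' := h ▸ (by simp [mem_auxChain])
    rw [mem_auxChain] at hmem
    rcases hmem with ⟨j, _, hj⟩ | h'
    · exact absurd hj (by simp)
    · exact Sum.inr_injective h'
  -- compute maxChains
  have hmc : @maxChains (Fin (m - 1) ⊕ Fin n) _ (auxOrd f) = Finset.univ.image (auxChain (m := m - 1) f) := by
    ext s
    simp only [maxChains, Finset.mem_filter, Finset.mem_univ, true_and, Finset.mem_image]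
    constructor
    · intro h
      obtain ⟨k, hk⟩ := hclass s h
      exact ⟨k, hk.symm⟩
    · rintro ⟨k, -, rfl⟩
      exact hmaxchain k
  show @mcMultiset (Fin (m - 1) ⊕ Fin n) _ (auxOrd f) = S
  rw [mcMultiset, hmc, Finset.image_val_of_injOn (hinj.injOn), Multiset.map_map]
  have hcomp : (Finset.card ∘ auxChain (m := m - 1) f) = f := funext hcard
  rw [hcomp]
  have huniv : (Finset.univ : Finset (Fin n)).val = ↑(List.finRange n) := by
    rw [Fin.univ_def]
  rw [huniv]
  show Multiset.map l.get ↑(List.finRange l.length) = S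
  rw [Multiset.map_coe, List.map_get_finRange]
  exact hlS
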